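/- For every ε ∈ (0,1], every q ∈ [1,∞), and every x ∈ ℝ^p, there exists a unique nonnegative real number v satisfying ∑_{i=1}^p (|x_i| − (1−ε)v)_+^q = (ε v)^q, where (t)_+ = max(t,0). -/

import Mathlib

open Real Set

/-- For every `ε ∈ (0,1]`, every `q ∈ [1,∞)`, and every `x ∈ ℝ^p`,
there exists a unique nonnegative real `v` with
`∑ i, (|x i| - (1-ε)v)₊ ^ q = (ε v) ^ q`. -/
theorem epsq_norm_exists_unique (p : ℕ) (ε q : ℝ) (hε0 : 0 < ε) (hε1 : ε ≤ 1)
    (hq : 1 ≤ q) (x : Fin p → ℝ) :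
    ∃! v : ℝ, 0 ≤ v ∧
      ∑ i : Fin p, (max (|x i| - (1 - ε) * v) 0) ^ q = (ε * v) ^ q := by
  have hq0 : 0 < q := lt_of_lt_of_le one_pos hq
  set F : ℝ → ℝ :=
    fun v => ∑ i : Fin p, (max (|x i| - (1 - ε) * v) 0) ^ q - (ε * v) ^ q with hF
  have hrpow : Continuous fun t : ℝ => t ^ q := by
    rw [continuous_iff_continuousAt]
    intro t
    exact Real.continuousAt_rpow_const t q (Or.inr hq0.le)
  have hcont : Continuous F := by
    apply Continuous.sub
    · apply continuous_finset_sum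
      intro i _
      exact hrpow.comp
        ((continuous_const.sub (continuous_const.mul continuous_id)).max continuous_const)
    · exact hrpow.comp (continuous_const.mul continuous_id)
  have h1ε : (0:ℝ) ≤ 1 - ε := by linarith
  have hanti : StrictAntiOn F (Ici (0:ℝ)) := by
    intro a ha b hb hab
    simp only [hF]
    have h1 : ∑ i : Fin p, (max (|x i| - (1 - ε) * b) 0) ^ q
        ≤ ∑ i : Fin p, (max (|x i| - (1 - ε) * a) 0) ^ q := by
      apply Finset.sum_le_sum
      intro i _
      apply Real.rpow_le_rpow (le_max_right _ _) _ hq0.le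
      apply max_le_max _ le_rfl
      have : (1 - ε) * a ≤ (1 - ε) * b := mul_le_mul_of_nonneg_left hab.le h1ε
      linarith
    have h2 : (ε * a) ^ q < (ε * b) ^ q := by
      apply Real.rpow_lt_rpow (mul_nonneg hε0.le ha) _ hq0
      exact mul_lt_mul_of_pos_left hab hε0
    linarith
  -- the sum S and the upper bound M
  set S : ℝ := ∑ i : Fin p, |x i| ^ q with hS
  have hS0 : 0 ≤ S := Finset.sum_nonneg fun i _ => Real.rpow_nonneg (abs_nonneg _) q
  set M : ℝ := S ^ (1/q) / ε with hM
  have hM0 : 0 ≤ M := div_nonneg (Real.rpow_nonneg hS0 _) hε0.le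
  have hF0 : F 0 = S := by
    simp only [hF, hS, mul_zero, sub_zero]
    rw [Real.zero_rpow hq0.ne']
    rw [sub_zero]
    exact Finset.sum_congr rfl fun i _ => by rw [max_eq_left (abs_nonneg _)]
  have hεM : ε * M = S ^ (1/q) := by
    rw [hM]
    field_simp [hM]
  have hFM : F M ≤ 0 := by
    have hpow : (ε * M) ^ q = S := by
      rw [hεM, one_div, ← Real.rpow_mul hS0, inv_mul_cancel₀ hq0.ne', Real.rpow_one]
    simp only [hF, hpow]
    have : ∑ i : Fin p, (max (|x i| - (1 - ε) * M) 0) ^ q ≤ S := by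
      apply Finset.sum_le_sum
      intro i _
      apply Real.rpow_le_rpow (le_max_right _ _) _ hq0.le
      apply max_le _ (abs_nonneg _)
      have : 0 ≤ (1 - ε) * M := mul_nonneg h1ε hM0
      linarith
    linarith
  -- existence by IVT
  obtain ⟨v, hvmem, hv⟩ : ∃ v ∈ Icc (0:ℝ) M, F v = 0 := by
    have := intermediate_value_Icc' hM0 hcont.continuousOn
    have h0mem : (0:ℝ) ∈ Icc (F M) (F 0) := ⟨hFM, by rw [hF0]; exact hS0⟩
    obtain ⟨v, hv1, hv2⟩ := this h0mem
    exact ⟨v, hv1, hv2⟩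
  refine ⟨v, ⟨hvmem.1, by have := hv; simp only [hF] at this; linarith⟩, ?_⟩
  rintro w ⟨hw0, hw⟩
  have hFw : F w = 0 := by simp only [hF]; linarith
  exact hanti.injOn hw0 hvmem.1 (by rw [hFw, hv])
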